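/- Let α ∈ (0, π/2] and let Λ = {λ_k}_{k∈ℕ} ⊂ ℂ∖ℝ satisfy α ≤ |arg λ_k| ≤ π − α for all k, and let ε := Σ_{k∈ℕ} |Im(1/λ_k)| < +∞. Then for every nonnegative integrable function φ ∈ L¹(ℝ): Σ_{k∈ℕ} (P φ)(λ_k) ≤ (ε/(π sin²α)) · ∫_ℝ φ(x) dx, where (P φ)(z) = (1/π) ∫_ℝ |Im z| / ((t − Re z)² + (Im z)²) · φ(t) dt is the Poisson integral of φ at z ∈ ℂ∖ℝ. -/

import Mathlib

open MeasureTheory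
open scoped ENNReal

lemma sin_abs_le_abs_sin (x : ℝ) : Real.sin |x| ≤ |Real.sin x| := by
  rcases abs_cases x with ⟨h1, _⟩ | ⟨h1, _⟩
  · rw [h1]; exact le_abs_self _
  · rw [h1, Real.sin_neg]; exact neg_le_abs _

/-- if `Λ ⊂ ℂ∖ℝ` satisfies `α ≤ |arg λ_k| ≤ π − α` with
`0 < α ≤ π/2`, and `ε := Σ_k |Im(1/λ_k)| < ∞`, then for every nonnegative
`φ ∈ L¹(ℝ)`, `Σ_k (Pφ)(λ_k) ≤ (ε/(π sin²α)) ∫ φ`. -/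
theorem poisson_sum_bound (α : ℝ) (hα : α ∈ Set.Ioc 0 (Real.pi / 2))
    (Λ : ℕ → ℂ) (hΛ : ∀ k, (Λ k).im ≠ 0)
    (harg : ∀ k, α ≤ |(Λ k).arg| ∧ |(Λ k).arg| ≤ Real.pi - α)
    (hsum : Summable fun k => |((Λ k)⁻¹).im|)
    (φ : ℝ → ℝ) (hint : Integrable φ) (hpos : ∀ x, 0 ≤ φ x) :
    (∑' k : ℕ, ENNReal.ofReal
        ((1 / Real.pi) *
          ∫ t : ℝ, (|(Λ k).im| / ((t - (Λ k).re) ^ 2 + (Λ k).im ^ 2)) * φ t))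
      ≤ ENNReal.ofReal
          (((∑' k : ℕ, |((Λ k)⁻¹).im|) / (Real.pi * Real.sin α ^ 2)) *
            ∫ x : ℝ, φ x) := by
  obtain ⟨hα0, hα2⟩ := hα
  have hπ : (0:ℝ) < Real.pi := Real.pi_pos
  have hs : 0 < Real.sin α := Real.sin_pos_of_pos_of_lt_pi hα0 (by linarith)
  set I := ∫ x, φ x with hI
  have hI0 : 0 ≤ I := integral_nonneg hpos
  set C : ℕ → ℝ := fun k => |((Λ k)⁻¹).im| / Real.sin α ^ 2 with hC
  have hC0 : ∀ k, 0 ≤ C k := fun k => div_nonneg (abs_nonneg _) (by positivity)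
  -- pointwise kernel bound
  have hker : ∀ k t, |(Λ k).im| / ((t - (Λ k).re) ^ 2 + (Λ k).im ^ 2) ≤ C k := by
    intro k t
    set a := (Λ k).re
    set b := (Λ k).im with hbdef
    have hb : b ≠ 0 := hΛ k
    have hne : Λ k ≠ 0 := fun h => hb (by simp [hbdef, h])
    have habs : 0 < ‖Λ k‖ := norm_pos_iff.mpr hne
    have hsin1 : Real.sin α ≤ Real.sin |(Λ k).arg| := by
      rcases le_total |(Λ k).arg| (Real.pi / 2) with h | h
      · exact Real.sin_le_sin_of_le_of_le_pi_div_two (by linarith) h (harg k).1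
      · rw [show Real.sin |(Λ k).arg| = Real.sin (Real.pi - |(Λ k).arg|) from
          (Real.sin_pi_sub _).symm]
        exact Real.sin_le_sin_of_le_of_le_pi_div_two (by linarith) (by linarith)
          (by linarith [(harg k).2])
    have hsin : Real.sin α ≤ |Real.sin (Λ k).arg| :=
      hsin1.trans (sin_abs_le_abs_sin _)
    have hsa : Real.sin (Λ k).arg = b / ‖Λ k‖ := Complex.sin_arg _
    have himabs : Real.sin α * ‖Λ k‖ ≤ |b| := by
      rw [hsa, abs_div, abs_of_pos habs] at hsin
      calc Real.sin α * ‖Λ k‖ ≤ |b| / ‖Λ k‖ * ‖Λ k‖ :=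
            mul_le_mul_of_nonneg_right hsin habs.le
        _ = |b| := by field_simp
    have hns : Complex.normSq (Λ k) = a ^ 2 + b ^ 2 := by
      rw [Complex.normSq_apply]; ring
    have hsq : Real.sin α ^ 2 * (a ^ 2 + b ^ 2) ≤ b ^ 2 := by
      have h2 : (Real.sin α * ‖Λ k‖) ^ 2 ≤ |b| ^ 2 := by
        apply sq_le_sq' _ himabs
        nlinarith [abs_nonneg b]
      rw [mul_pow, Complex.sq_norm, hns, sq_abs] at h2
      linarith
    have hinv : |((Λ k)⁻¹).im| = |b| / Complex.normSq (Λ k) := by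
      rw [Complex.inv_im, abs_div, abs_neg, abs_of_nonneg (Complex.normSq_nonneg _)]
    have hb2 : 0 < b ^ 2 := lt_of_le_of_ne (sq_nonneg b) (Ne.symm (pow_ne_zero 2 hb))
    have hden1 : 0 < (t - a) ^ 2 + b ^ 2 :=
      add_pos_of_nonneg_of_pos (sq_nonneg _) hb2
    have hN : 0 < Complex.normSq (Λ k) := Complex.normSq_pos.mpr hne
    have hden2 : 0 < Real.sin α ^ 2 * Complex.normSq (Λ k) :=
      mul_pos (pow_pos hs 2) hN
    calc |b| / ((t - a) ^ 2 + b ^ 2)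
        ≤ |b| / (Real.sin α ^ 2 * Complex.normSq (Λ k)) := by
          apply div_le_div_of_nonneg_left (abs_nonneg b) hden2
          rw [hns]
          nlinarith [sq_nonneg (t - a)]
      _ = |b| / Complex.normSq (Λ k) / Real.sin α ^ 2 := by
          rw [div_div, mul_comm]
      _ = C k := by rw [hC]; simp only; rw [hinv]
  -- integrability of each term
  have hcont : ∀ k, Continuous fun t : ℝ =>
      |(Λ k).im| / ((t - (Λ k).re) ^ 2 + (Λ k).im ^ 2) := by
    intro k
    apply continuous_const.div (by continuity)
    intro t
    have hb2 : 0 < (Λ k).im ^ 2 :=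
      lt_of_le_of_ne (sq_nonneg _) (Ne.symm (pow_ne_zero 2 (hΛ k)))
    positivity
  have hint_k : ∀ k, Integrable (fun t : ℝ =>
      (|(Λ k).im| / ((t - (Λ k).re) ^ 2 + (Λ k).im ^ 2)) * φ t) := by
    intro k
    apply hint.bdd_mul (c := C k) (hcont k).aestronglyMeasurable
    refine Filter.Eventually.of_forall (fun t => ?_)
    have h1 := hker k t
    have h2 : 0 ≤ |(Λ k).im| / ((t - (Λ k).re) ^ 2 + (Λ k).im ^ 2) := by
      have hb2 : 0 < (Λ k).im ^ 2 :=
        lt_of_le_of_ne (sq_nonneg _) (Ne.symm (pow_ne_zero 2 (hΛ k)))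
      positivity
    rw [Real.norm_eq_abs, abs_of_nonneg h2]
    exact h1
  -- per-term integral bound
  have hterm : ∀ k, (1 / Real.pi) *
      (∫ t : ℝ, (|(Λ k).im| / ((t - (Λ k).re) ^ 2 + (Λ k).im ^ 2)) * φ t)
      ≤ |((Λ k)⁻¹).im| * (I / (Real.pi * Real.sin α ^ 2)) := by
    intro k
    have h1 : (∫ t : ℝ, (|(Λ k).im| / ((t - (Λ k).re) ^ 2 + (Λ k).im ^ 2)) * φ t)
        ≤ ∫ t : ℝ, C k * φ t := by
      apply integral_mono (hint_k k) (hint.const_mul _)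
      intro t
      exact mul_le_mul_of_nonneg_right (hker k t) (hpos t)
    have h2 : (∫ t : ℝ, C k * φ t) = C k * I := by
      rw [integral_const_mul]
    have h3 : (1 / Real.pi) * (∫ t : ℝ, (|(Λ k).im| / ((t - (Λ k).re) ^ 2 + (Λ k).im ^ 2)) * φ t)
        ≤ (1 / Real.pi) * (C k * I) := by
      apply mul_le_mul_of_nonneg_left _ (by positivity)
      rw [← h2]; exact h1
    refine h3.trans_eq ?_
    rw [hC]; simp only
    field_simp
  -- sum up
  calc (∑' k : ℕ, ENNReal.ofReal
        ((1 / Real.pi) *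
          ∫ t : ℝ, (|(Λ k).im| / ((t - (Λ k).re) ^ 2 + (Λ k).im ^ 2)) * φ t))
      ≤ ∑' k : ℕ, ENNReal.ofReal (|((Λ k)⁻¹).im| * (I / (Real.pi * Real.sin α ^ 2))) :=
        ENNReal.tsum_le_tsum fun k => ENNReal.ofReal_le_ofReal (hterm k)
    _ = ENNReal.ofReal (∑' k : ℕ, |((Λ k)⁻¹).im| * (I / (Real.pi * Real.sin α ^ 2))) := by
        rw [ENNReal.ofReal_tsum_of_nonneg
          (fun k => mul_nonneg (abs_nonneg _) (by positivity)) (hsum.mul_right _)]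
    _ = ENNReal.ofReal (((∑' k : ℕ, |((Λ k)⁻¹).im|) / (Real.pi * Real.sin α ^ 2)) * I) := by
        rw [tsum_mul_right]
        congr 1
        field_simp
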